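/- Let V : ℝ^d → ℝ be Lipschitz with constant L, let τ > 0, h > 0, and x₀ ∈ hℤ^d. If x₁ ∈ hℤ^d minimizes x ↦ V(x) + |x − x₀|²/(2τ) over hℤ^d and x₁ ≠ x₀, then h ≤ 2 L τ. -/

import Mathlib

lemma coord_le_norm (d : ℕ) (x : EuclideanSpace ℝ (Fin d)) (i : Fin d) :
    |x i| ≤ ‖x‖ := by
  rw [EuclideanSpace.norm_eq]
  have : |x i| = Real.sqrt (‖x i‖ ^ 2) := by
    rw [Real.sqrt_sq_eq_abs, abs_norm, Real.norm_eq_abs]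
  rw [this]
  apply Real.sqrt_le_sqrt
  exact Finset.single_le_sum (f := fun j => ‖x j‖ ^ 2) (fun j _ => by positivity) (Finset.mem_univ i)

/-- if a grid point `x₁ ≠ x₀` minimizes `V(x) + |x−x₀|²/(2τ)` over the grid
`hℤ^d` and `V` is `L`-Lipschitz, then `h ≤ 2 L τ`. -/
theorem stmt_3 (d : ℕ) (V : EuclideanSpace ℝ (Fin d) → ℝ) (L : NNReal)
    (hV : LipschitzWith L V) (τ h : ℝ) (hτ : 0 < τ) (hh : 0 < h)
    (x₀ x₁ : EuclideanSpace ℝ (Fin d))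
    (hx₀ : ∀ i, ∃ k : ℤ, x₀ i = h * k)
    (hx₁ : ∀ i, ∃ k : ℤ, x₁ i = h * k)
    (hmin : ∀ y : EuclideanSpace ℝ (Fin d), (∀ i, ∃ k : ℤ, y i = h * k) →
      V x₁ + ‖x₁ - x₀‖ ^ 2 / (2 * τ) ≤ V y + ‖y - x₀‖ ^ 2 / (2 * τ))
    (hne : x₁ ≠ x₀) :
    h ≤ 2 * (L : ℝ) * τ := by
  -- coordinate where they differ
  obtain ⟨i, hi⟩ : ∃ i, x₁ i ≠ x₀ i := by
    by_contra hc
    push_neg at hc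
    exact hne (PiLp.ext hc)
  obtain ⟨k₁, hk₁⟩ := hx₁ i
  obtain ⟨k₀, hk₀⟩ := hx₀ i
  have hkne : k₁ ≠ k₀ := by
    intro e; apply hi; rw [hk₁, hk₀, e]
  have h1 : (1 : ℝ) ≤ |(k₁ : ℝ) - k₀| := by
    have : (1 : ℤ) ≤ |k₁ - k₀| := Int.one_le_abs (sub_ne_zero.mpr hkne)
    calc (1:ℝ) = ((1:ℤ):ℝ) := by norm_num
    _ ≤ (|k₁ - k₀| : ℤ) := by exact_mod_cast this
    _ = |(k₁ : ℝ) - k₀| := by push_cast; ring_nf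
  have hcoord : h ≤ |x₁ i - x₀ i| := by
    rw [hk₁, hk₀, ← mul_sub, abs_mul, abs_of_pos hh]
    nlinarith
  have hN : h ≤ ‖x₁ - x₀‖ := by
    refine hcoord.trans ?_
    have := coord_le_norm d (x₁ - x₀) i
    simpa using this
  set N := ‖x₁ - x₀‖ with hNdef
  have hNpos : 0 < N := lt_of_lt_of_le hh hN
  have hmin0 := hmin x₀ hx₀
  have : V x₁ + N ^ 2 / (2 * τ) ≤ V x₀ := by simpa using hmin0
  have hlip : V x₀ - V x₁ ≤ (L : ℝ) * N := by
    have := hV.dist_le_mul x₀ x₁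
    rw [dist_eq_norm, dist_eq_norm] at this
    have h2 : V x₀ - V x₁ ≤ |V x₀ - V x₁| := le_abs_self _
    have h3 : ‖x₀ - x₁‖ = N := by rw [norm_sub_rev]
    calc V x₀ - V x₁ ≤ |V x₀ - V x₁| := h2
    _ = ‖V x₀ - V x₁‖ := (Real.norm_eq_abs _).symm
    _ ≤ (L : ℝ) * ‖x₀ - x₁‖ := this
    _ = (L : ℝ) * N := by rw [h3]
  have hNle : N ≤ 2 * (L : ℝ) * τ := by
    have h2τ : 0 < 2 * τ := by linarith
    have hd : N ^ 2 / (2 * τ) ≤ (L : ℝ) * N := by linarith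
    have key : N ^ 2 ≤ (L : ℝ) * N * (2 * τ) := (div_le_iff₀ h2τ).mp hd
    nlinarith
  linarith
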